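/- If two binary matrices A and B of the same size γ×κ have equal sets of overlap parameters (i.e., for every nonempty subset S of row indices, the number of columns having 1s in all rows of S is the same for A and B), then A and B are column-permuted versions of each other; conversely, column permutations preserve all overlap parameters. -/

import Mathlib

/-- The overlap parameter `t_S(M)`: the number of columns of `M` having 1s in all rows
indexed by `S`. -/
def overlap {γ κ : ℕ} (M : Matrix (Fin γ) (Fin κ) Bool) (S : Finset (Fin γ)) : ℕ :=
  (Finset.univ.filter fun j => ∀ i ∈ S, M i j = true).card

/-- Fiber count: number of columns of `M` equal (as a function of the row) to `f`. -/
def colCount {γ κ : ℕ} (M : Matrix (Fin γ) (Fin κ) Bool) (f : Fin γ → Bool) : ℕ :=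
  (Finset.univ.filter fun j => (fun i => M i j) = f).card

lemma overlap_eq_sum {γ κ : ℕ} (M : Matrix (Fin γ) (Fin κ) Bool) (T : Finset (Fin γ)) :
    overlap M T = ∑ f ∈ Finset.univ.filter (fun f : Fin γ → Bool => ∀ i ∈ T, f i = true),
      colCount M f := by
  classical
  unfold overlap
  rw [Finset.card_eq_sum_card_fiberwise
    (f := fun j => (fun i => M i j)) (t := Finset.univ.filter fun f => ∀ i ∈ T, f i = true)
    (by intro j hj; simp only [Finset.mem_coe, Finset.mem_filter, Finset.mem_univ, true_and] at hj ⊢; exact hj)]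
  apply Finset.sum_congr rfl
  intro f hf
  simp only [Finset.mem_filter, Finset.mem_univ, true_and] at hf
  unfold colCount
  congr 1
  ext j
  simp only [Finset.mem_filter, Finset.mem_univ, true_and, Finset.filter_filter]
  constructor
  · rintro ⟨-, h2⟩; exact h2
  · intro h2; exact ⟨fun i hi => by rw [congrFun h2 i]; exact hf i hi, h2⟩

theorem stmt12 (γ κ : ℕ) (A B : Matrix (Fin γ) (Fin κ) Bool) :
    (∀ S : Finset (Fin γ), S.Nonempty → overlap A S = overlap B S) ↔
      ∃ σ : Equiv.Perm (Fin κ), ∀ i j, B i j = A i (σ j) := by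
  classical
  constructor
  · intro h
    -- overlap equality for all T, including the empty set
    have h' : ∀ T : Finset (Fin γ), overlap A T = overlap B T := by
      intro T
      rcases T.eq_empty_or_nonempty with rfl | hT
      · unfold overlap; simp
      · exact h T hT
    -- all fiber counts are equal
    have key : ∀ m : ℕ, ∀ f : Fin γ → Bool,
        (Finset.univ.filter fun i => f i = false).card = m → colCount A f = colCount B f := by
      intro m
      induction m using Nat.strong_induction_on with
      | _ m ih =>
        intro f hf
        set T : Finset (Fin γ) := Finset.univ.filter (fun i => f i = true) with hTdef
        set t : Finset (Fin γ → Bool) :=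
          Finset.univ.filter (fun g : Fin γ → Bool => ∀ i ∈ T, g i = true) with htdef
        have hT := h' T
        rw [overlap_eq_sum A T, overlap_eq_sum B T] at hT
        have hfT : f ∈ t := by
          simp only [htdef, Finset.mem_filter, Finset.mem_univ, true_and, hTdef]
          intro i hi
          simpa using hi
        rw [← Finset.add_sum_erase _ _ hfT, ← Finset.add_sum_erase _ _ hfT] at hT
        have hrest : ∑ g ∈ t.erase f, colCount A g = ∑ g ∈ t.erase f, colCount B g := by
          apply Finset.sum_congr rfl
          intro g hg
          rw [Finset.mem_erase] at hg
          obtain ⟨hgf, hgt⟩ := hg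
          simp only [htdef, Finset.mem_filter, Finset.mem_univ, true_and] at hgt
          -- falses of g ⊊ falses of f
          have hsub : (Finset.univ.filter fun i => g i = false) ⊂
              (Finset.univ.filter fun i => f i = false) := by
            constructor
            · intro i hi
              simp only [Finset.mem_filter, Finset.mem_univ, true_and] at hi ⊢
              by_contra hfi
              have : f i = true := by revert hfi; cases f i <;> simp
              have := hgt i (by simp [hTdef, this])
              rw [this] at hi; exact Bool.true_eq_false.mp hi
            · intro hcon
              apply hgf
              funext i
              by_cases hfi : f i = true
              · rw [hgt i (by simp [hTdef, hfi]), hfi]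
              · have hfi' : f i = false := by revert hfi; cases f i <;> simp
                have : i ∈ Finset.univ.filter fun i => g i = false :=
                  hcon (by simp [hfi'])
                simp only [Finset.mem_filter, Finset.mem_univ, true_and] at this
                rw [this, hfi']
          exact ih _ (hf ▸ Finset.card_lt_card hsub) g rfl
        omega
    -- build the permutation from equal fiber counts
    have hfib : ∀ c : Fin γ → Bool,
        Fintype.card {j : Fin κ // (fun i => B i j) = c} =
        Fintype.card {j : Fin κ // (fun i => A i j) = c} := by
      intro c
      rw [Fintype.card_subtype, Fintype.card_subtype]
      exact (key _ c rfl).symm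
    let e : ∀ c : Fin γ → Bool,
        {j : Fin κ // (fun i => B i j) = c} ≃ {j : Fin κ // (fun i => A i j) = c} :=
      fun c => Fintype.equivOfCardEq (hfib c)
    refine ⟨Equiv.ofFiberEquiv e, fun i j => ?_⟩
    have := Equiv.ofFiberEquiv_map e j
    exact (congrFun this i).symm
  · rintro ⟨σ, hσ⟩ S hS
    unfold overlap
    apply Finset.card_equiv σ.symm
    intro j
    simp only [Finset.mem_filter, Finset.mem_univ, true_and]
    constructor
    · intro hj i hi
      rw [hσ]
      rw [Equiv.apply_symm_apply]
      exact hj i hi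
    · intro hj i hi
      have := hj i hi
      rw [hσ, Equiv.apply_symm_apply] at this
      exact this
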